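/- Let λ₁ ≥ λ₂ ≥ ⋯ ≥ λ_p ≥ 0, s ∈ {1,…,p} and τ ∈ [0,1]. For any β, β̂ ∈ ℝᵖ with ‖β‖₀ ≤ s, setting u = β̂ − β, one has τ‖u‖_* + ‖β‖_* − ‖β̂‖_* ≤ (1+τ)·(∑_{j=1}^s λ_j²)^{1/2}·‖u‖₂ − (1−τ)·∑_{j=s+1}^p λ_j u_j^♯, where (u₁^♯,…,u_p^♯) is a non-increasing rearrangement of (|u₁|,…,|u_p|). In particular, if λ₁ = ⋯ = λ_p = λ > 0 then τλ‖u‖₁ + λ‖β‖₁ − λ‖β̂‖₁ ≤ (1+τ)λ√s‖u‖₂ − (1−τ)λ∑_{j=s+1}^p u_j^♯. -/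

import Mathlib

open MeasureTheory ProbabilityTheory Real Finset
open scoped ENNReal NNReal BigOperators Classical

noncomputable section

/-- Empirical norm `‖u‖ₙ = √((1/n) ∑ᵢ uᵢ²)`. -/
def normn (n : ℕ) (u : Fin n → ℝ) : ℝ := Real.sqrt ((∑ i, (u i) ^ 2) / n)

/-- Euclidean (`ℓ₂`) norm on `ℝᵖ`. -/
def l2 (p : ℕ) (u : Fin p → ℝ) : ℝ := Real.sqrt (∑ j, (u j) ^ 2)

/-- `ℓ₁` norm on `ℝᵖ`. -/
def l1 (p : ℕ) (u : Fin p → ℝ) : ℝ := ∑ j, |u j|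

/-- Number of nonzero coordinates `‖u‖₀`. -/
def sparsity (p : ℕ) (u : Fin p → ℝ) : ℕ := (Finset.univ.filter fun j => u j ≠ 0).card

/-- Non-increasing rearrangement of `(|u₁|,…,|u_p|)`:
`sharp p u j` is the `(j+1)`-st largest value among the `|u i|` (0-indexed `j`). -/
def sharp (p : ℕ) (u : Fin p → ℝ) : Fin p → ℝ :=
  fun j => |u ((Tuple.sort fun i => -|u i|) j)|

/-- The Slope weights `λⱼ = Aσ√(log(2p/j)/n)`, indexed by `j ∈ {1,…,p}`. -/
def slopeWeight (n p : ℕ) (A σ : ℝ) (j : ℕ) : ℝ :=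
  A * σ * Real.sqrt (Real.log (2 * p / j) / n)

/-- The sorted `ℓ₁` norm `‖u‖₊ = ∑ⱼ λⱼ u♯ⱼ` associated with weights `lam` (1-indexed). -/
def sortedL1 (p : ℕ) (lam : ℕ → ℝ) (u : Fin p → ℝ) : ℝ :=
  ∑ j : Fin p, lam ((j : ℕ) + 1) * sharp p u j

/-- `b` is a Slope solution with design `X`, weights `lam` and data `y`. -/
def IsSlopeSol (n p : ℕ) (X : Matrix (Fin n) (Fin p) ℝ) (lam : ℕ → ℝ)
    (y : Fin n → ℝ) (b : Fin p → ℝ) : Prop :=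
  ∀ β : Fin p → ℝ,
    normn n (X.mulVec b - y) ^ 2 + 2 * sortedL1 p lam b ≤
      normn n (X.mulVec β - y) ^ 2 + 2 * sortedL1 p lam β

/-- The WRE constant `ϑ(s,c₀)`: infimum of `‖Xδ‖ₙ/‖δ‖₂` over the cone
`{δ ≠ 0 : ‖δ‖₊ ≤ (1+c₀)‖δ‖₂ (∑_{j=1}^s λⱼ²)^{1/2}}`. -/
def thetaWRE (n p : ℕ) (X : Matrix (Fin n) (Fin p) ℝ) (lam : ℕ → ℝ) (s : ℕ) (c0 : ℝ) : ℝ :=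
  sInf ((fun δ => normn n (X.mulVec δ) / l2 p δ) ''
    {δ : Fin p → ℝ | δ ≠ 0 ∧
      sortedL1 p lam δ ≤ (1 + c0) * l2 p δ * Real.sqrt (∑ j ∈ Finset.Icc 1 s, lam j ^ 2)})

section AuxLemmas
variable {p : ℕ}

lemma sharp_antitone (u : Fin p → ℝ) : Antitone (sharp p u) := by
  intro j k hjk
  have h := Tuple.monotone_sort (fun i => -|u i|) hjk
  simp only [Function.comp] at h
  simp only [sharp]
  linarith

lemma sharp_nonneg (u : Fin p → ℝ) (j : Fin p) : 0 ≤ sharp p u j := abs_nonneg _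

lemma sum_sharp_fun (u : Fin p → ℝ) (F : ℝ → ℝ) :
    ∑ j, F (sharp p u j) = ∑ i, F |u i| :=
  Equiv.sum_comp (Tuple.sort fun i => -|u i|) (fun i => F |u i|)

lemma sum_sharp_sq (u : Fin p → ℝ) : ∑ j, (sharp p u j) ^ 2 = ∑ i, (u i) ^ 2 := by
  rw [sum_sharp_fun u (fun x => x ^ 2)]
  simp [sq_abs]

lemma sum_perm_le_sortedL1 (lam : ℕ → ℝ)
    (hmono : ∀ j k : ℕ, 1 ≤ j → j ≤ k → k ≤ p → lam k ≤ lam j)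
    (u : Fin p → ℝ) (prm : Equiv.Perm (Fin p)) :
    ∑ j : Fin p, lam ((j : ℕ) + 1) * |u (prm j)| ≤ sortedL1 p lam u := by
  set σ := Tuple.sort fun i => -|u i| with hσ
  have hmv : Monovary (fun j : Fin p => lam ((j : ℕ) + 1)) (sharp p u) := by
    intro i j hij
    rcases lt_trichotomy i j with h | h | h
    · exact absurd (sharp_antitone u h.le) (not_le.mpr hij)
    · exact le_of_eq (by rw [h])
    · have h' : (j : ℕ) ≤ (i : ℕ) := Fin.le_iff_val_le_val.mp h.le
      exact hmono _ _ (by omega) (by omega) i.isLt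
  have key := hmv.sum_smul_comp_perm_le_sum_smul (σ := prm.trans σ.symm)
  have h2 : ∀ j : Fin p, sharp p u (σ.symm (prm j)) = |u (prm j)| := by
    intro j
    simp [sharp, hσ, Equiv.apply_symm_apply]
  calc ∑ j : Fin p, lam ((j : ℕ) + 1) * |u (prm j)|
      = ∑ j : Fin p, lam ((j : ℕ) + 1) • sharp p u ((prm.trans σ.symm) j) := by
        simp only [Equiv.trans_apply, h2, smul_eq_mul]
    _ ≤ ∑ j : Fin p, lam ((j : ℕ) + 1) • sharp p u j := key
    _ = sortedL1 p lam u := by simp [sortedL1, smul_eq_mul]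

lemma sharp_zero_of_sparsity_le (u : Fin p → ℝ) {s : ℕ} (hs : sparsity p u ≤ s)
    {j : Fin p} (hj : s ≤ (j : ℕ)) : sharp p u j = 0 := by
  by_contra hne
  set σ := Tuple.sort fun i => -|u i| with hσ
  have hcard : (Finset.univ.filter fun k : Fin p => sharp p u k ≠ 0).card = sparsity p u := by
    unfold sparsity
    apply Finset.card_bij (fun k _ => σ k)
    · intro a ha
      simp only [mem_filter, mem_univ, true_and] at ha ⊢
      simpa [sharp, abs_ne_zero] using ha
    · intro a _ b _ h; exact σ.injective h
    · intro b hb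
      simp only [mem_filter, mem_univ, true_and] at hb
      exact ⟨σ.symm b, by simp [sharp, hσ, abs_ne_zero, hb], by simp⟩
  have hsub : Finset.Iic j ⊆ Finset.univ.filter fun k : Fin p => sharp p u k ≠ 0 := by
    intro k hk
    simp only [Finset.mem_Iic] at hk
    simp only [mem_filter, mem_univ, true_and]
    intro h0
    exact hne (le_antisymm (h0 ▸ sharp_antitone u hk) (sharp_nonneg u j))
  have := Finset.card_le_card hsub
  rw [hcard, Fin.card_Iic] at this
  omega

end AuxLemmas

lemma key_lemma {p : ℕ} (lam : ℕ → ℝ)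
    (hnonneg : ∀ j, 0 ≤ lam j)
    (hmono : ∀ j k : ℕ, 1 ≤ j → j ≤ k → k ≤ p → lam k ≤ lam j)
    (s : ℕ) (hsp : s ≤ p)
    (τ : ℝ) (hτ0 : 0 ≤ τ)
    (β βhat : Fin p → ℝ) (hβ : sparsity p β ≤ s) :
    τ * sortedL1 p lam (βhat - β) + sortedL1 p lam β - sortedL1 p lam βhat ≤
      (1 + τ) * Real.sqrt (∑ j ∈ Finset.Icc 1 s, lam j ^ 2) * l2 p (βhat - β) -
        (1 - τ) * ∑ j ∈ Finset.univ.filter (fun j : Fin p => s ≤ (j : ℕ)),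
          lam ((j : ℕ) + 1) * sharp p (βhat - β) j := by
  classical
  set u : Fin p → ℝ := βhat - β with hu
  set U : ℝ := ∑ i, |u i| with hUdef
  have hU0 : 0 ≤ U := Finset.sum_nonneg fun i _ => abs_nonneg _
  have hUi : ∀ i, |u i| ≤ U := fun i =>
    Finset.single_le_sum (f := fun i => |u i|) (fun i _ => abs_nonneg _) (Finset.mem_univ i)
  set G : Finset ℝ := ((Finset.univ ×ˢ Finset.univ : Finset (Fin p × Fin p)).filter
      (fun pr => |β pr.2| < |β pr.1|)).image (fun pr => |β pr.1| - |β pr.2|) with hGdef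
  set δ : ℝ := if h : G.Nonempty then G.min' h else 1 with hδdef
  have hGpos : ∀ x ∈ G, 0 < x := by
    intro x hx
    rw [hGdef] at hx
    simp only [Finset.mem_image, Finset.mem_filter, Finset.mem_product] at hx
    obtain ⟨pr, ⟨_, hlt⟩, heq⟩ := hx
    exact lt_of_lt_of_eq (sub_pos.mpr hlt) heq
  have hδpos : 0 < δ := by
    by_cases h : G.Nonempty
    · rw [hδdef, dif_pos h]
      exact hGpos _ (Finset.min'_mem G h)
    · rw [hδdef, dif_neg h]; norm_num
  have hgap : ∀ i i' : Fin p, |β i| < |β i'| → δ ≤ |β i'| - |β i| := by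
    intro i i' h
    have hmem : |β i'| - |β i| ∈ G := by
      rw [hGdef]
      simp only [Finset.mem_image, Finset.mem_filter, Finset.mem_product]
      exact ⟨(i', i), ⟨⟨Finset.mem_univ _, Finset.mem_univ _⟩, h⟩, rfl⟩
    have hne : G.Nonempty := ⟨_, hmem⟩
    rw [hδdef, dif_pos hne]
    exact Finset.min'_le _ _ hmem
  set M : ℝ := (U + 1) / δ with hMdef
  have hM : M * δ = U + 1 := div_mul_cancel₀ _ (ne_of_gt hδpos)
  have hM0 : 0 ≤ M := div_nonneg (by linarith) hδpos.le
  set g : Fin p → ℝ := fun i => -(M * |β i| + |u i|) with hgdef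
  set ρ : Equiv.Perm (Fin p) := Tuple.sort g with hρdef
  have hgmono : Monotone (g ∘ ρ) := Tuple.monotone_sort g
  have hA : ∀ j k : Fin p, j ≤ k → |β (ρ k)| ≤ |β (ρ j)| := by
    intro j k hjk
    by_contra hlt
    push_neg at hlt
    have h1 := hgmono hjk
    simp only [Function.comp, hgdef] at h1
    have h2 : M * |β (ρ k)| + |u (ρ k)| ≤ M * |β (ρ j)| + |u (ρ j)| := by linarith
    have h3 := hgap _ _ hlt
    have h4 : M * δ ≤ M * (|β (ρ k)| - |β (ρ j)|) := mul_le_mul_of_nonneg_left h3 hM0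
    have h5 := hUi (ρ j)
    have h6 := abs_nonneg (u (ρ k))
    nlinarith
  have hAeq : ∀ j : Fin p, |β (ρ j)| = sharp p β j := by
    have hcomp : (fun i => -|β i|) ∘ ρ = (fun i => -|β i|) ∘ Tuple.sort (fun i => -|β i|) := by
      rw [Tuple.comp_sort_eq_comp_iff_monotone]
      intro j k hjk
      simp only [Function.comp]
      exact neg_le_neg (hA j k hjk)
    intro j
    have := congrFun hcomp j
    simp only [Function.comp] at this
    simp only [sharp]
    linarith
  have hβ0 : ∀ j : Fin p, s ≤ (j : ℕ) → β (ρ j) = 0 := by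
    intro j hj
    have h := sharp_zero_of_sparsity_le β hβ hj
    rw [← hAeq j] at h
    exact abs_eq_zero.mp h
  have hB : ∀ j k : Fin p, s ≤ (j : ℕ) → j ≤ k → |u (ρ k)| ≤ |u (ρ j)| := by
    intro j k hj hjk
    have h1 := hgmono hjk
    simp only [Function.comp, hgdef] at h1
    have hk : s ≤ (k : ℕ) := le_trans hj (Fin.le_iff_val_le_val.mp hjk)
    rw [hβ0 j hj, hβ0 k hk] at h1
    simp only [abs_zero, mul_zero, zero_add] at h1
    linarith
  have hC : ∀ j : Fin p, s ≤ (j : ℕ) → sharp p u j ≤ |u (ρ j)| := by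
    intro j hj
    by_contra hlt
    push_neg at hlt
    set σu : Equiv.Perm (Fin p) := Tuple.sort (fun i => -|u i|) with hσu
    have hmaps : ∀ m : Fin p, m ∈ Finset.Iic j → ρ.symm (σu m) ∈ Finset.Iio j := by
      intro m hm
      rw [Finset.mem_Iic] at hm
      rw [Finset.mem_Iio]
      by_contra hge
      push_neg at hge
      have h1 : |u (ρ (ρ.symm (σu m)))| ≤ |u (ρ j)| := hB j _ hj hge
      rw [Equiv.apply_symm_apply] at h1
      have h3 : sharp p u j ≤ sharp p u m := sharp_antitone u hm
      have h2 : |u (σu m)| = sharp p u m := rfl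
      linarith [h2 ▸ h1]
    have hcard := Finset.card_le_card_of_injOn (fun m => ρ.symm (σu m)) hmaps
      (fun a _ b _ h => σu.injective (ρ.symm.injective h))
    rw [Fin.card_Iic, Fin.card_Iio] at hcard
    omega
  -- notation for sums
  set P : Fin p → Prop := fun j => (j : ℕ) < s with hP
  have hfilter : (Finset.univ.filter fun j : Fin p => ¬ P j)
      = Finset.univ.filter fun j : Fin p => s ≤ (j : ℕ) := by
    apply Finset.filter_congr
    intro j _
    simp [hP, not_lt]
  set Head : ℝ := ∑ j ∈ Finset.univ.filter P, lam ((j : ℕ) + 1) * sharp p u j with hHead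
  set Tail : ℝ := ∑ j ∈ Finset.univ.filter (fun j : Fin p => s ≤ (j : ℕ)),
      lam ((j : ℕ) + 1) * sharp p u j with hTail
  have hsplit : sortedL1 p lam u = Head + Tail := by
    rw [sortedL1, ← Finset.sum_filter_add_sum_filter_not Finset.univ P, hfilter]
  set A : ℝ := ∑ j ∈ Finset.univ.filter P, lam ((j : ℕ) + 1) * |u (ρ j)| with hA2
  set B : ℝ := ∑ j ∈ Finset.univ.filter (fun j : Fin p => s ≤ (j : ℕ)),
      lam ((j : ℕ) + 1) * |u (ρ j)| with hB2
  -- step: sortedL1 β - sortedL1 βhat ≤ A - B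
  have h1 : ∑ j : Fin p, lam ((j : ℕ) + 1) * |βhat (ρ j)| ≤ sortedL1 p lam βhat :=
    sum_perm_le_sortedL1 lam hmono βhat ρ
  have h2 : sortedL1 p lam β = ∑ j : Fin p, lam ((j : ℕ) + 1) * |β (ρ j)| := by
    rw [sortedL1]
    exact Finset.sum_congr rfl fun j _ => by rw [hAeq j]
  have hterm : ∀ j : Fin p, lam ((j : ℕ) + 1) * |β (ρ j)| - lam ((j : ℕ) + 1) * |βhat (ρ j)| ≤
      (if P j then lam ((j : ℕ) + 1) * |u (ρ j)| else -(lam ((j : ℕ) + 1) * |u (ρ j)|)) := by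
    intro j
    by_cases hc : P j
    · rw [if_pos hc]
      have htri : |β (ρ j)| - |βhat (ρ j)| ≤ |u (ρ j)| := by
        have := abs_sub_abs_le_abs_sub (β (ρ j)) (βhat (ρ j))
        have habs : |β (ρ j) - βhat (ρ j)| = |u (ρ j)| := by
          rw [hu]; simp [abs_sub_comm]
        linarith [habs ▸ this]
      have := mul_le_mul_of_nonneg_left htri (hnonneg ((j : ℕ) + 1))
      linarith [this, mul_sub (lam ((j : ℕ) + 1)) (|β (ρ j)|) (|βhat (ρ j)|)]
    · rw [if_neg hc]
      have hz : β (ρ j) = 0 := hβ0 j (not_lt.mp hc)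
      have hhat : βhat (ρ j) = u (ρ j) := by rw [hu]; simp [hz]
      rw [hz, hhat]
      simp
  have h3 : sortedL1 p lam β - sortedL1 p lam βhat ≤ A - B := by
    have hsum := Finset.sum_le_sum (fun j (_ : j ∈ Finset.univ) => hterm j)
    rw [Finset.sum_ite, hfilter, Finset.sum_neg_distrib] at hsum
    have hexp : ∑ j : Fin p, (lam ((j : ℕ) + 1) * |β (ρ j)| - lam ((j : ℕ) + 1) * |βhat (ρ j)|)
        = (∑ j : Fin p, lam ((j : ℕ) + 1) * |β (ρ j)|)
          - ∑ j : Fin p, lam ((j : ℕ) + 1) * |βhat (ρ j)| := Finset.sum_sub_distrib _ _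
    rw [hexp] at hsum
    rw [h2]
    rw [hA2, hB2]
    linarith
  -- Cauchy-Schwarz bound
  set C : ℝ := Real.sqrt (∑ j ∈ Finset.Icc 1 s, lam j ^ 2) * l2 p u with hCdef
  have hlamsum : ∑ j ∈ Finset.univ.filter P, lam ((j : ℕ) + 1) ^ 2
      = ∑ j ∈ Finset.Icc 1 s, lam j ^ 2 := by
    have hb1 : ∑ j ∈ Finset.univ.filter P, lam ((j : ℕ) + 1) ^ 2
        = ∑ k ∈ Finset.range s, lam (k + 1) ^ 2 := by
      apply Finset.sum_nbij (i := fun (j : Fin p) => (j : ℕ))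
      · intro a ha
        simp only [Finset.mem_filter, Finset.mem_univ, true_and, hP] at ha
        exact Finset.mem_range.mpr ha
      · intro a _ b _ hab
        exact Fin.val_injective hab
      · intro k hk
        simp only [Finset.coe_filter, Finset.mem_coe, Finset.mem_range] at hk ⊢
        refine ⟨⟨k, lt_of_lt_of_le hk hsp⟩, ?_, rfl⟩
        simp only [Set.mem_setOf_eq, Finset.mem_univ, true_and, hP]
        exact hk
      · intro a _; rfl
    have hb2 : ∑ k ∈ Finset.Icc 1 s, lam k ^ 2 = ∑ k ∈ Finset.range s, lam (k + 1) ^ 2 := by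
      rw [← Finset.Ico_add_one_right_eq_Icc, Finset.sum_Ico_eq_sum_range]
      apply Finset.sum_congr (by norm_num)
      intro k _
      rw [Nat.add_comm]
    rw [hb1, hb2]
  have hCS : ∀ v : Fin p → ℝ, (∀ j, 0 ≤ v j) → (∑ j : Fin p, v j ^ 2 = ∑ i, (u i) ^ 2) →
      ∑ j ∈ Finset.univ.filter P, lam ((j : ℕ) + 1) * v j ≤ C := by
    intro v hv hsum
    have h := Real.sum_mul_le_sqrt_mul_sqrt (Finset.univ.filter P)
        (fun j => lam ((j : ℕ) + 1)) (fun j => v j)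
    refine h.trans ?_
    rw [hCdef, l2]
    apply mul_le_mul
    · rw [hlamsum]
    · apply Real.sqrt_le_sqrt
      rw [← hsum]
      exact Finset.sum_le_sum_of_subset_of_nonneg (Finset.filter_subset _ _)
        (fun j _ _ => sq_nonneg _)
    · exact Real.sqrt_nonneg _
    · exact Real.sqrt_nonneg _
  have hHeadC : Head ≤ C := hCS (sharp p u) (sharp_nonneg u) (sum_sharp_sq u)
  have hAC : A ≤ C := by
    apply hCS (fun j => |u (ρ j)|) (fun j => abs_nonneg _)
    calc ∑ j : Fin p, |u (ρ j)| ^ 2 = ∑ j : Fin p, (u (ρ j)) ^ 2 := by simp [sq_abs]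
      _ = ∑ i, (u i) ^ 2 := Equiv.sum_comp ρ (fun i => (u i) ^ 2)
  have hTB : Tail ≤ B := by
    apply Finset.sum_le_sum
    intro j hj
    simp only [Finset.mem_filter, Finset.mem_univ, true_and] at hj
    exact mul_le_mul_of_nonneg_left (hC j hj) (hnonneg _)
  have hmul1 : τ * Head ≤ τ * C := mul_le_mul_of_nonneg_left hHeadC hτ0
  rw [hsplit]
  have hgoal : τ * (Head + Tail) + sortedL1 p lam β - sortedL1 p lam βhat ≤
      (1 + τ) * C - (1 - τ) * Tail := by nlinarith
  calc τ * (Head + Tail) + sortedL1 p lam β - sortedL1 p lam βhat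
      ≤ (1 + τ) * C - (1 - τ) * Tail := hgoal
    _ = (1 + τ) * Real.sqrt (∑ j ∈ Finset.Icc 1 s, lam j ^ 2) * l2 p u - (1 - τ) * Tail := by
        rw [hCdef]; ring

lemma sortedL1_const {p : ℕ} (lam0 : ℝ) (v : Fin p → ℝ) :
    sortedL1 p (fun _ => lam0) v = lam0 * l1 p v := by
  rw [sortedL1, l1, Finset.mul_sum]
  exact sum_sharp_fun v (fun x => lam0 * x)

/-- Lemma 1 (algebra of the sorted ℓ₁ norm): for nonincreasing nonnegative weights
`λ₁ ≥ … ≥ λ_p ≥ 0`, `τ ∈ [0,1]`, and `β` with `‖β‖₀ ≤ s`, setting `u = β̂ - β`,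
`τ‖u‖₊ + ‖β‖₊ - ‖β̂‖₊ ≤ (1+τ)(∑_{j≤s} λⱼ²)^{1/2}‖u‖₂ - (1-τ)∑_{j>s} λⱼ u♯ⱼ`;
in particular for constant weights `λⱼ = λ₀ > 0` the analogous ℓ₁ inequality holds. -/
theorem sorted_l1_algebra
    {p : ℕ} (hp : 0 < p)
    (lam : ℕ → ℝ)
    (hnonneg : ∀ j, 0 ≤ lam j)
    (hmono : ∀ j k : ℕ, 1 ≤ j → j ≤ k → k ≤ p → lam k ≤ lam j)
    (s : ℕ) (hs1 : 1 ≤ s) (hsp : s ≤ p)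
    (τ : ℝ) (hτ0 : 0 ≤ τ) (hτ1 : τ ≤ 1)
    (β βhat : Fin p → ℝ) (hβ : sparsity p β ≤ s) :
    (τ * sortedL1 p lam (βhat - β) + sortedL1 p lam β - sortedL1 p lam βhat ≤
      (1 + τ) * Real.sqrt (∑ j ∈ Finset.Icc 1 s, lam j ^ 2) * l2 p (βhat - β) -
        (1 - τ) * ∑ j ∈ Finset.univ.filter (fun j : Fin p => s ≤ (j : ℕ)),
          lam ((j : ℕ) + 1) * sharp p (βhat - β) j)
    ∧
    (∀ lam0 : ℝ, 0 < lam0 →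
      τ * lam0 * l1 p (βhat - β) + lam0 * l1 p β - lam0 * l1 p βhat ≤
        (1 + τ) * lam0 * Real.sqrt s * l2 p (βhat - β) -
          (1 - τ) * lam0 * ∑ j ∈ Finset.univ.filter (fun j : Fin p => s ≤ (j : ℕ)),
            sharp p (βhat - β) j) := by
  constructor
  · exact key_lemma lam hnonneg hmono s hsp τ hτ0 β βhat hβ
  · intro lam0 h0
    have key := key_lemma (fun _ => lam0) (fun _ => h0.le)
      (fun _ _ _ _ _ => le_refl lam0) s hsp τ hτ0 β βhat hβ
    rw [sortedL1_const, sortedL1_const, sortedL1_const] at key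
    have hsq : Real.sqrt (∑ j ∈ Finset.Icc 1 s, lam0 ^ 2) = lam0 * Real.sqrt s := by
      rw [Finset.sum_const, Nat.card_Icc]
      simp only [Nat.add_sub_cancel, nsmul_eq_mul]
      rw [Real.sqrt_mul (Nat.cast_nonneg s), Real.sqrt_sq h0.le]
      ring
    rw [hsq] at key
    have htail : ∑ j ∈ Finset.univ.filter (fun j : Fin p => s ≤ (j : ℕ)),
        lam0 * sharp p (βhat - β) j
        = lam0 * ∑ j ∈ Finset.univ.filter (fun j : Fin p => s ≤ (j : ℕ)),
            sharp p (βhat - β) j := by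
      rw [Finset.mul_sum]
    rw [htail] at key
    ring_nf at key ⊢
    linarith
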